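/- arXiv:2210.04611 — 2 statements merged into one kernel-verified Lean document; each statement's English description precedes it below -/
import Mathlib

section
/- Let Q be a medial quandle and let d ∈ Dis(Q) have a fixed point, say d(q₀) = q₀ for some q₀ ∈ Q. Then d commutes with β_{q₀}, and consequently β_q d β_q⁻¹ = d for every q ∈ Q (that is, d = t·d in the Λ-module Dis(Q)). -/
open LaurentPolynomial

set_option synthInstance.maxHeartbeats 1000000
set_option maxHeartbeats 1000000

noncomputable section

/-- The ring `Λ = ℤ[t,t⁻¹]` of Laurent polynomials with integer coefficients. -/
abbrev Λ : Type := LaurentPolynomial ℤ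

/-- The variable `t ∈ Λ`. -/
abbrev tL : Λ := T 1

/-- A medial quandle structure on a type `Q`: an idempotent binary operation whose right
translations are bijections, satisfying the medial law. -/
structure MedialQuandleStr (Q : Type*) where
  op : Q → Q → Q
  idem : ∀ x, op x x = x
  bij : ∀ y, Function.Bijective fun x => op x y
  medial : ∀ w x y z, op (op w x) (op y z) = op (op w y) (op x z)

/-- A quandle structure on a type `T`. -/
structure QuandleStr (T : Type*) where
  op : T → T → T
  idem : ∀ x, op x x = x
  bij : ∀ y, Function.Bijective fun x => op x y
  distrib : ∀ x y z, op (op x y) z = op (op x z) (op y z)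

namespace MedialQuandleStr

variable {Q : Type*} (s : MedialQuandleStr Q)

/-- The translation `β_y : x ↦ x ▷ y`, as a permutation of `Q`. -/
def β (y : Q) : Equiv.Perm Q := Equiv.ofBijective _ (s.bij y)

/-- `β(Q)`: the subgroup of permutations generated by the translations. -/
def transGroup : Subgroup (Equiv.Perm Q) := Subgroup.closure (Set.range s.β)

/-- The displacement group `Dis(Q)`, generated by the elementary displacements
`β_y β_z⁻¹`. -/
def Dis : Subgroup (Equiv.Perm Q) :=
  Subgroup.closure {d : Equiv.Perm Q | ∃ y z, d = s.β y * (s.β z)⁻¹}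

/-- The orbit of `q`: the smallest subset of `Q` containing `q` and closed under the
action of `β(Q)`. -/
def orbit (q : Q) : Set Q := {x | ∃ g ∈ s.transGroup, g q = x}

end MedialQuandleStr

section Construction

variable {M : Type*} [AddCommGroup M] [Module Λ M] {I : Type*}

/-- The carrier of the quandle `Q(N,(m_i),(X_i))`: the disjoint union of the quotients
`Q_i = N/X_i`. -/
def QCar (N : Submodule Λ M) (X : I → Submodule Λ ↥N) : Type _ :=
  Σ i : I, ↥N ⧸ X i

/-- The condition `(1-t)·X_i = 0` for all `i`. -/
def annCond (N : Submodule Λ M) (X : I → Submodule Λ ↥N) : Prop :=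
  ∀ i, ∀ x ∈ X i, (1 - tL) • (x : ↥N) = 0

/-- Multiplication by `1-t`, descended from `N/X_j` to `N` (well defined since
`(1-t)·X_j = 0`). -/
def oneSubT (N : Submodule Λ M) {X : I → Submodule Λ ↥N} (h : annCond N X) (j : I) :
    (↥N ⧸ X j) →ₗ[Λ] ↥N :=
  Submodule.liftQ (X j) ((1 - tL) • (LinearMap.id : ↥N →ₗ[Λ] ↥N))
    (fun x hx => by simpa using h j x hx)

/-- The operation of `Q(N,(m_i),(X_i))`: for `x ∈ Q_i` and `y ∈ Q_j`,
`x ▷ y = m_j - m_i + t·x + (1-t)·y + X_i ∈ Q_i`. -/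
def qop (N : Submodule Λ M) (m : I → M) {X : I → Submodule Λ ↥N}
    (hm : ∀ i j, m i - m j ∈ N) (h : annCond N X) :
    QCar N X → QCar N X → QCar N X :=
  fun x y =>
    ⟨x.1, Submodule.Quotient.mk (⟨m y.1 - m x.1, hm y.1 x.1⟩ : ↥N)
        + tL • x.2 + Submodule.Quotient.mk (oneSubT N h y.1 y.2)⟩

end Construction

namespace MedialQuandleStr

variable {Q : Type*} (s : MedialQuandleStr Q)

lemma β_apply (y x : Q) : s.β y x = s.op x y := rfl

lemma medial_perm (x y z : Q) :
    s.β (s.op y z) * s.β x = s.β (s.op x z) * s.β y := by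
  ext w
  simp only [Equiv.Perm.mul_apply, β_apply]
  exact s.medial w x y z

/-- The subgroup of permutations `g` satisfying `g β_y g⁻¹ = β_{g y}` for all `y`. -/
def HAut : Subgroup (Equiv.Perm Q) where
  carrier := {g | ∀ y, g * s.β y * g⁻¹ = s.β (g y)}
  one_mem' := by intro y; simp
  mul_mem' := by
    intro g h hg hh y
    have e : g * h * s.β y * (g * h)⁻¹ = g * (h * s.β y * h⁻¹) * g⁻¹ := by group
    rw [e, hh, hg]
    rfl
  inv_mem' := by
    intro g hg y
    have := hg (g⁻¹ y)
    rw [show g (g⁻¹ y) = y from g.apply_symm_apply y] at this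
    rw [← this]
    group

lemma β_mem_HAut (y : Q) : s.β y ∈ s.HAut := by
  intro z
  have h := s.medial_perm y z y
  rw [s.idem] at h
  rw [β_apply, ← h]
  group

lemma trans_le_HAut : s.transGroup ≤ s.HAut := by
  rw [transGroup, Subgroup.closure_le]
  rintro g ⟨y, rfl⟩
  exact s.β_mem_HAut y

lemma dis_le_HAut : s.Dis ≤ s.HAut := by
  rw [Dis, Subgroup.closure_le]
  rintro g ⟨y, z, rfl⟩
  exact mul_mem (s.β_mem_HAut y) (inv_mem (s.β_mem_HAut z))

/-- The key commutation identity `β_y β_z⁻¹ β_x = β_x β_z⁻¹ β_y`. -/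
lemma swap3 (y z x : Q) :
    s.β y * (s.β z)⁻¹ * s.β x = s.β x * (s.β z)⁻¹ * s.β y := by
  have h := s.medial_perm x y z
  have hy : s.β (s.op y z) = s.β z * s.β y * (s.β z)⁻¹ := (s.β_mem_HAut z y).symm
  have hx : s.β (s.op x z) = s.β z * s.β x * (s.β z)⁻¹ := (s.β_mem_HAut z x).symm
  rw [hy, hx] at h
  exact mul_left_cancel (a := s.β z) (by simpa [mul_assoc] using h)

/-- Generators of the displacement group commute pairwise. -/
lemma gen_comm (a b c e : Q) :
    (s.β a * (s.β b)⁻¹) * (s.β c * (s.β e)⁻¹) =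
      (s.β c * (s.β e)⁻¹) * (s.β a * (s.β b)⁻¹) := by
  calc s.β a * (s.β b)⁻¹ * (s.β c * (s.β e)⁻¹)
      = (s.β a * (s.β b)⁻¹ * s.β c) * (s.β e)⁻¹ := by group
    _ = (s.β c * (s.β b)⁻¹ * s.β a) * (s.β e)⁻¹ := by rw [s.swap3 a b c]
    _ = s.β c * ((s.β e)⁻¹ * (s.β e * (s.β b)⁻¹ * s.β a) * (s.β e)⁻¹) := by group
    _ = s.β c * ((s.β e)⁻¹ * (s.β a * (s.β b)⁻¹ * s.β e) * (s.β e)⁻¹) := by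
        rw [s.swap3 e b a]
    _ = s.β c * (s.β e)⁻¹ * (s.β a * (s.β b)⁻¹) := by group

/-- Every generator of `Dis(Q)` commutes with every element of `Dis(Q)`. -/
lemma dis_comm_gen (a b : Q) {d : Equiv.Perm Q} (hd : d ∈ s.Dis) :
    (s.β a * (s.β b)⁻¹) * d = d * (s.β a * (s.β b)⁻¹) := by
  have hle : s.Dis ≤ Subgroup.centralizer {s.β a * (s.β b)⁻¹} := by
    rw [Dis, Subgroup.closure_le]
    rintro x ⟨y, z, rfl⟩
    rw [SetLike.mem_coe, Subgroup.mem_centralizer_iff]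
    rintro g hg
    rw [Set.mem_singleton_iff] at hg
    subst hg
    exact s.gen_comm a b y z
  have h := hle hd
  rw [Subgroup.mem_centralizer_iff] at h
  exact h _ rfl

/-- `Dis(Q)` is closed under conjugation by translations. -/
lemma conj_mem_dis (r : Q) {d : Equiv.Perm Q} (hd : d ∈ s.Dis) :
    s.β r * d * (s.β r)⁻¹ ∈ s.Dis := by
  induction hd using Subgroup.closure_induction with
  | mem x hx =>
    obtain ⟨y, z, rfl⟩ := hx
    have e : s.β r * (s.β y * (s.β z)⁻¹) * (s.β r)⁻¹ =
        (s.β r * s.β y * (s.β r)⁻¹) * (s.β r * s.β z * (s.β r)⁻¹)⁻¹ := by group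
    rw [e, s.β_mem_HAut r y, s.β_mem_HAut r z]
    exact Subgroup.subset_closure ⟨_, _, rfl⟩
  | one => simpa using one_mem s.Dis
  | mul x y hx hy ihx ihy =>
    have e : s.β r * (x * y) * (s.β r)⁻¹ =
        (s.β r * x * (s.β r)⁻¹) * (s.β r * y * (s.β r)⁻¹) := by group
    rw [e]; exact mul_mem ihx ihy
  | inv x hx ihx =>
    have e : s.β r * x⁻¹ * (s.β r)⁻¹ = (s.β r * x * (s.β r)⁻¹)⁻¹ := by group
    rw [e]; exact inv_mem ihx

end MedialQuandleStr

/-- If a displacement `d` of a medial quandle has a fixed point `q₀`,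
then `d` commutes with `β_{q₀}`, and consequently `β_q d β_q⁻¹ = d` for every `q`
(that is, `d = t·d` in the `Λ`-module `Dis(Q)`). -/
theorem stmt4 {Q : Type*} (s : MedialQuandleStr Q) (d : Equiv.Perm Q)
    (hd : d ∈ s.Dis) (q₀ : Q) (hfix : d q₀ = q₀) :
    d * s.β q₀ = s.β q₀ * d ∧ ∀ q : Q, s.β q * d * (s.β q)⁻¹ = d := by
  have hH := s.dis_le_HAut hd
  have h1 : d * s.β q₀ = s.β q₀ * d := by
    have hc := hH q₀
    rw [hfix] at hc
    calc d * s.β q₀ = d * s.β q₀ * d⁻¹ * d := by group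
      _ = s.β q₀ * d := by rw [hc]
  refine ⟨h1, fun q => ?_⟩
  have hc := s.dis_comm_gen q q₀ hd
  have h2 : s.β q * d = d * s.β q := by
    calc s.β q * d = (s.β q * (s.β q₀)⁻¹) * (s.β q₀ * d) := by group
      _ = (s.β q * (s.β q₀)⁻¹) * (d * s.β q₀) := by rw [← h1]
      _ = ((s.β q * (s.β q₀)⁻¹) * d) * s.β q₀ := by group
      _ = (d * (s.β q * (s.β q₀)⁻¹)) * s.β q₀ := by rw [hc]
      _ = d * s.β q := by group
  rw [h2]
  group
end
end

section
/- Let Q = Q(N,(m_i),(X_i)) be the quandle of the construction, let S be the subgroup of N generated by (1−t²)·N ∪ {(1+t)·(m_j − m_i) : i, j ∈ I}, and suppose S is a Λ-submodule of N. Let π: M → M/S be the canonical quotient map. Then Q′ := Q(N/S, (π(m_i)), (π(X_i))) is a well-defined instance of the construction (with ambient module M/S), Q′ is an involutory medial quandle, the map p: Q → Q′ sending x + X_i ∈ Q_i to π(x) + π(X_i) ∈ Q′_i is a surjective quandle homomorphism, and every quandle homomorphism g from Q to an involutory quandle factors through p (there is a quandle homomorphism g′: Q′ → target with g = g′ ∘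 p); consequently Q′ is isomorphic to the involutory quotient Q_inv of Q. -/
open LaurentPolynomial

set_option synthInstance.maxHeartbeats 1000000
set_option maxHeartbeats 1000000

noncomputable section

section Helperlemmas

lemma tL_mul_Tneg : tL * T (-1) = 1 := by
  rw [← T_add]; norm_num

lemma tLsq_mul_Tneg2 : tL ^ 2 * T (-2) = 1 := by
  rw [sq, ← T_add, ← T_add]; norm_num

variable {M : Type*} [AddCommGroup M] [Module Λ M] {I : Type*}

lemma qmk_eq {N : Submodule Λ M} {X : I → Submodule Λ ↥N} {i : I} {u v : ↥N ⧸ X i}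
    (e : u = v) : (⟨i, u⟩ : QCar N X) = ⟨i, v⟩ := by rw [e]

variable (N : Submodule Λ M) (m : I → M) {X : I → Submodule Λ ↥N}
  (hm : ∀ i j, m i - m j ∈ N) (h : annCond N X)

lemma qop_mk (i j : I) (a b : ↥N) :
    qop N m hm h ⟨i, Submodule.Quotient.mk a⟩ ⟨j, Submodule.Quotient.mk b⟩ =
      ⟨i, Submodule.Quotient.mk ((⟨m j - m i, hm j i⟩ : ↥N) + tL • a + (1 - tL) • b)⟩ := by
  apply qmk_eq
  show Submodule.Quotient.mk _ + tL • Submodule.Quotient.mk a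
      + Submodule.Quotient.mk (oneSubT N h j (Submodule.Quotient.mk b)) = _
  rw [oneSubT, Submodule.liftQ_apply]
  simp [Submodule.Quotient.mk_add, Submodule.Quotient.mk_smul]

lemma qop_idem : ∀ x : QCar N X, qop N m hm h x x = x := by
  rintro ⟨i, q⟩
  obtain ⟨a, rfl⟩ := Submodule.Quotient.mk_surjective (X i) q
  rw [qop_mk]
  apply qmk_eq
  congr 1
  have h0 : (⟨m i - m i, hm i i⟩ : ↥N) = 0 := Subtype.ext (sub_self _)
  rw [h0, zero_add]
  module

lemma qop_bij : ∀ y : QCar N X, Function.Bijective fun x => qop N m hm h x y := by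
  intro y
  constructor
  · rintro ⟨i, q⟩ ⟨i', q'⟩ e
    obtain ⟨a, rfl⟩ := Submodule.Quotient.mk_surjective (X i) q
    obtain ⟨a', rfl⟩ := Submodule.Quotient.mk_surjective (X i') q'
    obtain ⟨j, qy⟩ := y
    obtain ⟨b, rfl⟩ := Submodule.Quotient.mk_surjective (X j) qy
    simp only [qop_mk] at e
    obtain ⟨rfl, e2⟩ := Sigma.mk.inj_iff.mp e
    have e3 := eq_of_heq e2
    rw [Submodule.Quotient.eq] at e3
    apply qmk_eq
    rw [Submodule.Quotient.eq]
    have e4 : (⟨m j - m i, hm j i⟩ : ↥N) + tL • a + (1 - tL) • b -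
        ((⟨m j - m i, hm j i⟩ : ↥N) + tL • a' + (1 - tL) • b) = tL • (a - a') := by module
    rw [e4] at e3
    have e5 := Submodule.smul_mem (X i) (T (-1)) e3
    rw [smul_smul, mul_comm, tL_mul_Tneg, one_smul] at e5
    exact e5
  · rintro ⟨i, q⟩
    refine ⟨⟨i, (T (-1) : Λ) • (q - Submodule.Quotient.mk ⟨m y.1 - m i, hm y.1 i⟩
        - Submodule.Quotient.mk (oneSubT N h y.1 y.2))⟩, ?_⟩
    show (⟨i, _ + tL • (T (-1) • _) + _⟩ : QCar N X) = ⟨i, q⟩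
    apply qmk_eq
    rw [smul_smul, tL_mul_Tneg, one_smul]
    abel

lemma qop_medial : ∀ w x y z : QCar N X,
    qop N m hm h (qop N m hm h w x) (qop N m hm h y z) =
      qop N m hm h (qop N m hm h w y) (qop N m hm h x z) := by
  rintro ⟨iw, qw⟩ ⟨ix, qx⟩ ⟨iy, qy⟩ ⟨iz, qz⟩
  obtain ⟨w, rfl⟩ := Submodule.Quotient.mk_surjective _ qw
  obtain ⟨x, rfl⟩ := Submodule.Quotient.mk_surjective _ qx
  obtain ⟨y, rfl⟩ := Submodule.Quotient.mk_surjective _ qy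
  obtain ⟨z, rfl⟩ := Submodule.Quotient.mk_surjective _ qz
  rw [qop_mk, qop_mk, qop_mk, qop_mk, qop_mk, qop_mk]
  apply qmk_eq
  refine congrArg _ ?_
  apply Subtype.ext
  push_cast
  module

end Helperlemmas

universe w

/-- Let `Q = Q(N,(m_i),(X_i))`, let `S` (here `Sm`) be the subgroup
of `N` generated by `(1-t²)·N ∪ {(1+t)·(m_j - m_i)}`, and suppose `S` is a
`Λ`-submodule of `N`. Let `π` be the quotient map `M → M/S` (where `SM` is `S` viewed
as a submodule of `M`), `N' = π(N)`, `r : N → N'` the restriction of `π`,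
`X'_i = π(X_i)` and `m'_i = π(m_i)`. Then `Q' = Q(N/S,(π m_i),(π X_i))` is a
well-defined instance of the construction, `Q'` is an involutory medial quandle, the
induced map `p : Q → Q'` is a surjective quandle homomorphism, and every quandle
homomorphism from `Q` to an involutory quandle factors through `p`; consequently `Q'`
is the involutory quotient `Q_inv` of `Q`. -/
theorem stmt18 {M : Type*} [AddCommGroup M] [Module Λ M] {I : Type*} [Nonempty I]
    (N : Submodule Λ M) (m : I → M) (X : I → Submodule Λ ↥N)
    (hm : ∀ i j, m i - m j ∈ N) (h : annCond N X)
    (Sm : Submodule Λ ↥N)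
    (hSm : (Sm : Set ↥N) =
      (AddSubgroup.closure (Set.range (fun a : ↥N => (1 - tL ^ 2) • a)
        ∪ {v : ↥N | ∃ i j : I, v = (1 + tL) • (⟨m j - m i, hm j i⟩ : ↥N)}) : Set ↥N))
    (SM : Submodule Λ M) (hSM : SM = Sm.map N.subtype)
    (N' : Submodule Λ (M ⧸ SM)) (hN' : N' = N.map SM.mkQ)
    (r : ↥N →ₗ[Λ] ↥N') (hr : ∀ a : ↥N, (r a).val = SM.mkQ (a : M))
    (X' : I → Submodule Λ ↥N') (hX' : ∀ i, X' i = (X i).map r)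
    (m' : I → M ⧸ SM) (hm'def : ∀ i, m' i = SM.mkQ (m i)) :
    ∃ (hm' : ∀ i j, m' i - m' j ∈ N') (hann' : annCond N' X'),
      (∀ x : QCar N' X', qop N' m' hm' hann' x x = x) ∧
      (∀ y : QCar N' X', Function.Bijective fun x => qop N' m' hm' hann' x y) ∧
      (∀ w x y z : QCar N' X',
        qop N' m' hm' hann' (qop N' m' hm' hann' w x) (qop N' m' hm' hann' y z) =
          qop N' m' hm' hann' (qop N' m' hm' hann' w y) (qop N' m' hm' hann' x z)) ∧
      (∀ x y : QCar N' X', qop N' m' hm' hann' (qop N' m' hm' hann' x y) y = x) ∧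
      ∃ p : QCar N X → QCar N' X',
        (∀ (i : I) (a : ↥N),
          p ⟨i, Submodule.Quotient.mk a⟩ = ⟨i, Submodule.Quotient.mk (r a)⟩) ∧
        Function.Surjective p ∧
        (∀ x y, p (qop N m hm h x y) = qop N' m' hm' hann' (p x) (p y)) ∧
        ∀ (T' : Type w) (qt : QuandleStr T'),
          (∀ a b : T', qt.op (qt.op a b) b = a) →
          ∀ g : QCar N X → T', (∀ x y, g (qop N m hm h x y) = qt.op (g x) (g y)) →
            ∃ g' : QCar N' X' → T',
              (∀ x y, g' (qop N' m' hm' hann' x y) = qt.op (g' x) (g' y)) ∧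
              ∀ x, g x = g' (p x) := by

  have hm' : ∀ i j, m' i - m' j ∈ N' := by
    intro i j
    rw [hm'def i, hm'def j, hN', ← map_sub]
    exact Submodule.mem_map_of_mem (hm i j)
  have kerSm : ∀ s : ↥N, s ∈ Sm → r s = 0 := by
    intro s hs
    apply Subtype.ext
    rw [hr]
    show SM.mkQ (s : M) = (0 : M ⧸ SM)
    rw [Submodule.mkQ_apply, Submodule.Quotient.mk_eq_zero, hSM]
    exact ⟨s, hs, rfl⟩
  have kerR : ∀ b : ↥N, r b = 0 → b ∈ Sm := by
    intro b hb
    have h1 : SM.mkQ (b : M) = 0 := by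
      have h2 := congrArg Subtype.val hb
      rw [hr] at h2
      simpa using h2
    rw [Submodule.mkQ_apply, Submodule.Quotient.mk_eq_zero, hSM] at h1
    obtain ⟨s, hs, hval⟩ := h1
    have h3 : s = b := Subtype.ext hval
    rwa [← h3]
  have hgen1 : ∀ a : ↥N, (1 - tL ^ 2) • a ∈ Sm := by
    intro a
    rw [← SetLike.mem_coe, hSm]
    exact AddSubgroup.subset_closure (Or.inl ⟨a, rfl⟩)
  have hgen2 : ∀ i j : I, (1 + tL) • (⟨m j - m i, hm j i⟩ : ↥N) ∈ Sm := by
    intro i j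
    rw [← SetLike.mem_coe, hSm]
    exact AddSubgroup.subset_closure (Or.inr ⟨i, j, rfl⟩)
  have rsurj : ∀ c : ↥N', ∃ a : ↥N, r a = c := by
    intro c
    have hc : (c : M ⧸ SM) ∈ N.map SM.mkQ := by rw [← hN']; exact c.2
    obtain ⟨n, hn, hval⟩ := hc
    exact ⟨⟨n, hn⟩, Subtype.ext (by rw [hr]; exact hval)⟩
  have hkill1 : ∀ c : ↥N', (1 - tL ^ 2) • c = 0 := by
    intro c
    obtain ⟨a, rfl⟩ := rsurj c
    rw [← map_smul]
    exact kerSm _ (hgen1 a)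
  have rmu : ∀ i j : I, r ⟨m j - m i, hm j i⟩ = ⟨m' j - m' i, hm' j i⟩ := by
    intro i j
    apply Subtype.ext
    rw [hr]
    show SM.mkQ (m j - m i) = m' j - m' i
    rw [hm'def i, hm'def j]
    exact map_sub _ _ _
  have hkill2 : ∀ i j : I, (1 + tL) • (⟨m' j - m' i, hm' j i⟩ : ↥N') = 0 := by
    intro i j
    rw [← rmu, ← map_smul]
    exact kerSm _ (hgen2 i j)
  have hann' : annCond N' X' := by
    intro i x hx
    rw [hX' i] at hx
    obtain ⟨x0, hx0, rfl⟩ := hx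
    rw [← map_smul, h i x0 hx0, map_zero]
  have hle : ∀ i, X i ≤ (X' i).comap r := by
    intro i x hx
    rw [Submodule.mem_comap, hX' i]
    exact Submodule.mem_map_of_mem hx
  refine ⟨hm', hann', qop_idem N' m' hm' hann', qop_bij N' m' hm' hann',
    qop_medial N' m' hm' hann', ?_, ?_⟩
  · -- involutory
    rintro ⟨i, q⟩ ⟨j, q'⟩
    obtain ⟨a, rfl⟩ := Submodule.Quotient.mk_surjective _ q
    obtain ⟨b, rfl⟩ := Submodule.Quotient.mk_surjective _ q'
    rw [qop_mk, qop_mk]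
    apply qmk_eq
    have e : (⟨m' j - m' i, hm' j i⟩ : ↥N') + tL • ((⟨m' j - m' i, hm' j i⟩ : ↥N')
          + tL • a + (1 - tL) • b) + (1 - tL) • b
        = a + ((1 + tL) • (⟨m' j - m' i, hm' j i⟩ : ↥N')
          + ((1 - tL ^ 2) • b - (1 - tL ^ 2) • a)) := by module
    rw [hkill2 i j, hkill1 b, hkill1 a] at e
    simp only [sub_zero, zero_add, add_zero] at e
    rw [e]
  · -- the map p and the universal property
    set pfun : QCar N X → QCar N' X' :=
      fun z => ⟨z.1, Submodule.mapQ (X z.1) (X' z.1) r (hle z.1) z.2⟩ with hpfun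
    have hp : ∀ (i : I) (a : ↥N),
        pfun ⟨i, Submodule.Quotient.mk a⟩ = ⟨i, Submodule.Quotient.mk (r a)⟩ := by
      intro i a
      apply qmk_eq
      exact Submodule.mapQ_apply _ _ r a
    have psurj : Function.Surjective pfun := by
      rintro ⟨i, q'⟩
      obtain ⟨c, rfl⟩ := Submodule.Quotient.mk_surjective _ q'
      obtain ⟨a, rfl⟩ := rsurj c
      exact ⟨⟨i, Submodule.Quotient.mk a⟩, hp i a⟩
    have phom : ∀ x y, pfun (qop N m hm h x y) = qop N' m' hm' hann' (pfun x) (pfun y) := by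
      rintro ⟨i, q⟩ ⟨j, q'⟩
      obtain ⟨a, rfl⟩ := Submodule.Quotient.mk_surjective _ q
      obtain ⟨b, rfl⟩ := Submodule.Quotient.mk_surjective _ q'
      rw [qop_mk, hp, hp, hp, qop_mk]
      apply qmk_eq
      rw [map_add, map_add, map_smul, map_smul, rmu]
    refine ⟨pfun, hp, psurj, phom, ?_⟩
    intro T' qt hinvT g hg
    have key : ∀ (i j : I) (a b : ↥N),
        g ⟨i, Submodule.Quotient.mk ((1 + tL) • (⟨m j - m i, hm j i⟩ : ↥N)
          + tL ^ 2 • a + (1 - tL ^ 2) • b)⟩ = g ⟨i, Submodule.Quotient.mk a⟩ := by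
      intro i j a b
      have e : (⟨m j - m i, hm j i⟩ : ↥N) + tL • ((⟨m j - m i, hm j i⟩ : ↥N)
            + tL • a + (1 - tL) • b) + (1 - tL) • b
          = (1 + tL) • (⟨m j - m i, hm j i⟩ : ↥N) + tL ^ 2 • a + (1 - tL ^ 2) • b := by
        module
      calc g ⟨i, Submodule.Quotient.mk ((1 + tL) • (⟨m j - m i, hm j i⟩ : ↥N)
            + tL ^ 2 • a + (1 - tL ^ 2) • b)⟩
          = g (qop N m hm h (qop N m hm h ⟨i, Submodule.Quotient.mk a⟩
              ⟨j, Submodule.Quotient.mk b⟩) ⟨j, Submodule.Quotient.mk b⟩) := by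
            rw [qop_mk, qop_mk, e]
        _ = qt.op (qt.op (g ⟨i, Submodule.Quotient.mk a⟩) (g ⟨j, Submodule.Quotient.mk b⟩))
              (g ⟨j, Submodule.Quotient.mk b⟩) :=
              (hg _ _).trans (congrArg (fun t => qt.op t (g ⟨j, Submodule.Quotient.mk b⟩)) (hg _ _))
        _ = g ⟨i, Submodule.Quotient.mk a⟩ := hinvT _ _
    have key0 : ∀ (i : I) (a b : ↥N),
        g ⟨i, Submodule.Quotient.mk (tL ^ 2 • a + (1 - tL ^ 2) • b)⟩
          = g ⟨i, Submodule.Quotient.mk a⟩ := by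
      intro i a b
      have h0 : (⟨m i - m i, hm i i⟩ : ↥N) = 0 := Subtype.ext (sub_self _)
      have h1 := key i i a b
      rwa [h0, smul_zero, zero_add] at h1
    have keysc : ∀ (i : I) (a : ↥N),
        g ⟨i, Submodule.Quotient.mk ((T (-2) : Λ) • a)⟩ = g ⟨i, Submodule.Quotient.mk a⟩ := by
      intro i a
      have h1 := key0 i ((T (-2) : Λ) • a) 0
      rw [smul_zero, add_zero, smul_smul, tLsq_mul_Tneg2, one_smul] at h1
      exact h1.symm
    have keyB : ∀ (i : I) (c n : ↥N),
        g ⟨i, Submodule.Quotient.mk (c + (1 - tL ^ 2) • n)⟩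
          = g ⟨i, Submodule.Quotient.mk c⟩ := by
      intro i c n
      have h1 := key0 i ((T (-2) : Λ) • c) n
      rw [smul_smul, tLsq_mul_Tneg2, one_smul] at h1
      rw [h1, keysc]
    have keyCi : ∀ (i k : I) (c : ↥N),
        g ⟨i, Submodule.Quotient.mk (c + (1 + tL) • (⟨m k - m i, hm k i⟩ : ↥N))⟩
          = g ⟨i, Submodule.Quotient.mk c⟩ := by
      intro i k c
      have h1 := key i k ((T (-2) : Λ) • c) 0
      rw [smul_zero, add_zero, smul_smul, tLsq_mul_Tneg2, one_smul, add_comm] at h1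
      rw [h1, keysc]
    have keyC : ∀ (i j k : I) (c : ↥N),
        g ⟨i, Submodule.Quotient.mk (c + (1 + tL) • (⟨m k - m j, hm k j⟩ : ↥N))⟩
          = g ⟨i, Submodule.Quotient.mk c⟩ := by
      intro i j k c
      have e : c + (1 + tL) • (⟨m k - m j, hm k j⟩ : ↥N)
          = (c - (1 + tL) • (⟨m j - m i, hm j i⟩ : ↥N))
            + (1 + tL) • (⟨m k - m i, hm k i⟩ : ↥N) := by
        apply Subtype.ext
        push_cast
        module
      rw [e, keyCi]
      have e2 : c = (c - (1 + tL) • (⟨m j - m i, hm j i⟩ : ↥N))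
          + (1 + tL) • (⟨m j - m i, hm j i⟩ : ↥N) := by abel
      conv_rhs => rw [e2]
      rw [keyCi]
    have keyS : ∀ (i : I) (s : ↥N), s ∈ Sm → ∀ c : ↥N,
        g ⟨i, Submodule.Quotient.mk (c + s)⟩ = g ⟨i, Submodule.Quotient.mk c⟩ := by
      intro i s hs
      rw [← SetLike.mem_coe, hSm, SetLike.mem_coe] at hs
      refine AddSubgroup.closure_induction
        (p := fun s _ => ∀ c : ↥N,
          g ⟨i, Submodule.Quotient.mk (c + s)⟩ = g ⟨i, Submodule.Quotient.mk c⟩)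
        ?_ ?_ ?_ ?_ hs
      · rintro x (⟨n, rfl⟩ | ⟨j', k', rfl⟩)
        · exact fun c => keyB i c n
        · exact fun c => keyC i j' k' c
      · intro c
        rw [add_zero]
      · intro x y hx hy hpx hpy c
        rw [← add_assoc, hpy, hpx]
      · intro x hx hpx c
        have h1 := hpx (c + -x)
        have e : c + -x + x = c := by abel
        rw [e] at h1
        exact h1.symm
    have wd : ∀ (i : I) (a a' : ↥N),
        (Submodule.Quotient.mk (r a) : ↥N' ⧸ X' i) = Submodule.Quotient.mk (r a') →
          g ⟨i, Submodule.Quotient.mk a⟩ = g ⟨i, Submodule.Quotient.mk a'⟩ := by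
      intro i a a' e
      rw [Submodule.Quotient.eq, hX' i] at e
      obtain ⟨x, hx, hxe⟩ := e
      have h0 : r (a - a' - x) = 0 := by rw [map_sub, map_sub, hxe]; abel
      have hs := kerR _ h0
      have ea : a = (a' + x) + (a - a' - x) := by abel
      rw [ea, keyS i _ hs]
      have e2 : (Submodule.Quotient.mk (a' + x) : ↥N ⧸ X i) = Submodule.Quotient.mk a' := by
        rw [Submodule.Quotient.eq]
        simpa using hx
      rw [e2]
    have hf : ∀ i : I, Function.Surjective
        (fun a : ↥N => (Submodule.Quotient.mk (r a) : ↥N' ⧸ X' i)) := by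
      intro i q
      obtain ⟨c, rfl⟩ := Submodule.Quotient.mk_surjective _ q
      obtain ⟨a, rfl⟩ := rsurj c
      exact ⟨a, rfl⟩
    set g' : QCar N' X' → T' :=
      fun z => g ⟨z.1, Submodule.Quotient.mk (Function.surjInv (hf z.1) z.2)⟩ with hg'def
    have gfact : ∀ x, g x = g' (pfun x) := by
      rintro ⟨i, q⟩
      obtain ⟨a, rfl⟩ := Submodule.Quotient.mk_surjective _ q
      rw [hp i a, hg'def]
      exact (wd i _ a (Function.surjInv_eq (hf i) (Submodule.Quotient.mk (r a)))).symm
    have ghom : ∀ x' y', g' (qop N' m' hm' hann' x' y') = qt.op (g' x') (g' y') := by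
      intro x' y'
      obtain ⟨x, rfl⟩ := psurj x'
      obtain ⟨y, rfl⟩ := psurj y'
      rw [← phom, ← gfact, ← gfact, ← gfact, hg]
    exact ⟨g', ghom, gfact⟩
end
end
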